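/- Let M ∈ ℝ^{n×n} be a matrix all of whose complex eigenvalues have strictly positive real part (anti-Hurwitz), and let H ∈ ℝ^{n×p}. Then the map w ↦ exp(ln|w|·M)·H·(w/|w|), defined for w ∈ ℝ^p \ {0}, tends to 0 as w → 0; consequently the map w ↦ exp(ln|w|·M)·H·(w/|w|) extended by 0 at w = 0 is continuous at 0. -/

import Mathlib

/-
Statement 8 (Appendix A): continuity at the origin of the homogeneous
output-injection term for an anti-Hurwitz matrix M.
-/

open Matrix Filter

/-- The Euclidean norm of a finitely-indexed real vector. -/
noncomputable def euclNorm {ι : Type*} [Fintype ι] (x : ι → ℝ) : ℝ :=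
  Real.sqrt (x ⬝ᵥ x)

open NormedSpace

attribute [local instance] Matrix.linftyOpNormedAddCommGroup Matrix.linftyOpNormedRing
  Matrix.linftyOpNormedAlgebra

namespace InjAux

lemma real_decay {a : ℝ} (ha : 0 < a) (j : ℕ) :
    Tendsto (fun t : ℝ => Real.exp (a * t) * |t| ^ j) atBot (nhds 0) := by
  have h1 : Tendsto (fun s : ℝ => s ^ j * Real.exp (-s)) atTop (nhds 0) :=
    Real.tendsto_pow_mul_exp_neg_atTop_nhds_zero j
  have h2 : Tendsto (fun t : ℝ => -(a * t)) atBot atTop := by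
    apply tendsto_neg_atBot_atTop.comp
    exact (tendsto_id (α := ℝ) (x := atBot)).const_mul_atBot ha
  have h3 := (h1.comp h2).div_const (a ^ j)
  rw [zero_div] at h3
  refine h3.congr' ?_
  filter_upwards [eventually_le_atBot (0 : ℝ)] with t ht
  have habs : |t| = -t := abs_of_nonpos ht
  have hne : a ^ j ≠ 0 := pow_ne_zero _ ha.ne'
  simp only [Function.comp_apply, neg_neg, habs]
  rw [show -(a * t) = a * (-t) by ring, mul_pow]
  field_simp

lemma exp_smul_one {n : ℕ} (c : ℂ) :
    exp (c • (1 : Matrix (Fin n) (Fin n) ℂ)) = Complex.exp c • 1 := by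
  erw [← Algebra.algebraMap_eq_smul_one, ← algebraMap_exp_comm,
    Algebra.algebraMap_eq_smul_one, Complex.exp_eq_exp_ℂ]

lemma vec_decay {n : ℕ} (Mc : Matrix (Fin n) (Fin n) ℂ)
    (hMc : ∀ z ∈ spectrum ℂ Mc, 0 < z.re) (x : Fin n → ℂ) :
    Tendsto (fun t : ℝ => (exp (t • Mc)).mulVec x) atBot (nhds 0) := by
  set f : Module.End ℂ (Fin n → ℂ) := Matrix.toLinAlgEquiv' Mc with hf
  have hx : x ∈ ⨆ μ : ℂ, f.maxGenEigenspace μ := by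
    simp [Module.End.iSup_maxGenEigenspace_eq_top]
  refine Submodule.iSup_induction _
    (motive := fun y => Tendsto (fun t : ℝ => (exp (t • Mc)).mulVec y) atBot (nhds 0)) hx
    ?_ ?_ ?_
  · -- main case
    intro μ y hy
    rcases eq_or_ne y 0 with rfl | hy0
    · simpa [Matrix.mulVec_zero] using tendsto_const_nhds
    -- μ is in the spectrum of Mc, hence 0 < μ.re
    have hμ : 0 < μ.re := by
      have hval : f.HasUnifEigenvalue μ (⊤ : ℕ∞) := by
        intro hbot
        have hmem : y ∈ (⊥ : Submodule ℂ (Fin n → ℂ)) := hbot ▸ hy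
        exact hy0 ((Submodule.mem_bot ℂ).mp hmem)
      have h1 : f.HasUnifEigenvalue μ 1 := hval.lt zero_lt_one
      have h2 : μ ∈ spectrum ℂ f := h1.mem_spectrum
      rw [hf, AlgEquiv.spectrum_eq] at h2
      exact hMc μ h2
    -- generalized eigenvector equation, transported to matrices
    set N : Matrix (Fin n) (Fin n) ℂ := Mc - μ • 1 with hN
    obtain ⟨K, hK⟩ : ∃ K : ℕ, (N ^ K).mulVec y = 0 := by
      rw [Module.End.mem_maxGenEigenspace] at hy
      obtain ⟨k, hk⟩ := hy
      refine ⟨k, ?_⟩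
      have hfN : f - μ • 1 = Matrix.toLinAlgEquiv' N := by
        rw [hN, map_sub, _root_.map_smul, _root_.map_one, hf]
      have h3 : ((f - μ • (1 : Module.End ℂ (Fin n → ℂ))) ^ k) y
          = (Matrix.toLinAlgEquiv' (N ^ k)) y := by
        rw [hfN, ← map_pow]
      rw [h3, Matrix.toLinAlgEquiv'_apply] at hk
      exact hk
    -- key expansion of the exponential
    have key : ∀ t : ℝ, (exp (t • Mc)).mulVec y
        = ∑ j ∈ Finset.range K,
            (Complex.exp ((t : ℂ) * μ) * ((j.factorial : ℂ)⁻¹ * (t : ℂ) ^ j)) •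
              ((N ^ j).mulVec y) := by
      intro t
      have hsplit : t • Mc = ((t : ℂ) * μ) • (1 : Matrix (Fin n) (Fin n) ℂ) + t • N := by
        rw [hN, smul_sub]
        have h4 : t • (μ • (1 : Matrix (Fin n) (Fin n) ℂ)) = ((t : ℂ) * μ) • 1 := by
          rw [← smul_assoc, Complex.real_smul]
        rw [← h4]; abel
      have hcomm : Commute (((t : ℂ) * μ) • (1 : Matrix (Fin n) (Fin n) ℂ)) (t • N) :=
        (Commute.one_left (t • N)).smul_left _
      erw [hsplit, exp_add_of_commute hcomm, exp_smul_one, smul_mul_assoc, one_mul,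
        Matrix.smul_mulVec]
      -- expand exp (t • N) applied to y as a finite sum
      have hser : (exp (t • N)).mulVec y
          = ∑ j ∈ Finset.range K, ((j.factorial : ℂ)⁻¹ * (t : ℂ) ^ j) • ((N ^ j).mulVec y) := by
        let L : Matrix (Fin n) (Fin n) ℂ →ₗ[ℂ] (Fin n → ℂ) :=
          { toFun := fun A => A.mulVec y
            map_add' := fun A B => Matrix.add_mulVec A B y
            map_smul' := fun c A => Matrix.smul_mulVec c A y }
        let L' : Matrix (Fin n) (Fin n) ℂ →L[ℂ] (Fin n → ℂ) :=
          LinearMap.toContinuousLinearMap L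
        have h0 : (exp (t • N)).mulVec y = L' (exp (t • N)) := rfl
        rw [h0, exp_eq_tsum ℂ, L'.map_tsum (expSeries_summable' (𝕂 := ℂ) (t • N))]
        rw [tsum_eq_sum (s := Finset.range K) ?_]
        · refine Finset.sum_congr rfl fun j _ => ?_
          show ((j.factorial : ℂ)⁻¹ • (t • N) ^ j).mulVec y = _
          rw [smul_pow, Matrix.smul_mulVec, Matrix.smul_mulVec]
          ext i
          simp [Pi.smul_apply, smul_eq_mul, Complex.real_smul]
          push_cast
          ring
        · intro j hj
          have hjK : K ≤ j := Nat.le_of_not_lt fun h => hj (Finset.mem_range.mpr h)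
          have hz : (N ^ j).mulVec y = 0 := by
            rw [show j = (j - K) + K from (Nat.sub_add_cancel hjK).symm, pow_add,
              ← Matrix.mulVec_mulVec, hK, Matrix.mulVec_zero]
          show ((j.factorial : ℂ)⁻¹ • (t • N) ^ j).mulVec y = 0
          rw [smul_pow, Matrix.smul_mulVec, Matrix.smul_mulVec, hz,
            smul_zero, smul_zero]
      erw [hser, Finset.smul_sum]
      refine Finset.sum_congr rfl fun j _ => ?_
      rw [smul_smul]
    -- take the limit
    rw [show (fun t : ℝ => (exp (t • Mc)).mulVec y)
        = fun t : ℝ => ∑ j ∈ Finset.range K,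
            (Complex.exp ((t : ℂ) * μ) * ((j.factorial : ℂ)⁻¹ * (t : ℂ) ^ j)) •
              ((N ^ j).mulVec y) from funext key]
    rw [show (0 : Fin n → ℂ) = ∑ j ∈ Finset.range K, (0 : Fin n → ℂ) by simp]
    refine tendsto_finset_sum _ fun j _ => ?_
    have hsc : Tendsto
        (fun t : ℝ => Complex.exp ((t : ℂ) * μ) * ((j.factorial : ℂ)⁻¹ * (t : ℂ) ^ j))
        atBot (nhds 0) := by
      rw [tendsto_zero_iff_norm_tendsto_zero]
      have hlim := (real_decay hμ j).mul_const ((j.factorial : ℝ)⁻¹)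
      rw [zero_mul] at hlim
      refine hlim.congr fun t => ?_
      rw [norm_mul, norm_mul, norm_pow, Complex.norm_exp]
      have hre : ((t : ℂ) * μ).re = μ.re * t := by
        simp [Complex.mul_re]
        ring
      rw [hre]
      simp
      ring
    have hfin := hsc.smul_const ((N ^ j).mulVec y)
    rw [zero_smul] at hfin
    exact hfin
  · simpa using tendsto_const_nhds
  · intro y z hy hz
    simpa [Matrix.mulVec_add] using hy.add hz

lemma mat_decay {n : ℕ} (M : Matrix (Fin n) (Fin n) ℝ)
    (hM : ∀ z : ℂ, z ∈ spectrum ℂ (M.map (algebraMap ℝ ℂ)) → 0 < z.re) :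
    Tendsto (fun t : ℝ => exp (t • M)) atBot (nhds (0 : Matrix (Fin n) (Fin n) ℝ)) := by
  set Mc : Matrix (Fin n) (Fin n) ℂ := M.map (algebraMap ℝ ℂ) with hMc
  have hmap : ∀ t : ℝ, (exp (t • M)).map (algebraMap ℝ ℂ) = exp (t • Mc) := by
    intro t
    have hcont : Continuous fun A : Matrix (Fin n) (Fin n) ℝ => A.map (algebraMap ℝ ℂ) :=
      Continuous.matrix_map continuous_id Complex.continuous_ofReal
    have h1 := map_exp ((algebraMap ℝ ℂ).mapMatrix
      (m := Fin n)) (by exact hcont) (t • M)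
    rw [RingHom.mapMatrix_apply, RingHom.mapMatrix_apply] at h1
    erw [h1]
    have h2 : (t • M).map (algebraMap ℝ ℂ) = t • Mc := by
      ext i j
      simp only [hMc, Matrix.map_apply, Matrix.smul_apply, smul_eq_mul,
        Complex.ofReal_mul, Complex.real_smul, Complex.coe_algebraMap]
    rw [h2]
    rfl
  have hentry : ∀ i j : Fin n,
      Tendsto (fun t : ℝ => exp (t • M) i j) atBot (nhds 0) := by
    intro i j
    have hv := vec_decay Mc (fun z hz => hM z hz) (Pi.single j 1)
    have hvi : Tendsto (fun t : ℝ => (exp (t • Mc)).mulVec (Pi.single j 1) i)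
        atBot (nhds 0) := by
      have := tendsto_pi_nhds.mp hv i
      simpa using this
    have hre := (Complex.continuous_re.tendsto 0).comp hvi
    simp only [Complex.zero_re] at hre
    refine hre.congr fun t => ?_
    have h3 : (exp (t • Mc)).mulVec (Pi.single j 1) i = exp (t • Mc) i j := by
      simp [Matrix.mulVec_single]
    have h4 : exp (t • Mc) i j = ((exp (t • M)).map (algebraMap ℝ ℂ)) i j :=
      by rw [hmap t]
    rw [Function.comp_apply, h3, h4]
    simp [Matrix.map_apply]
  exact tendsto_pi_nhds.mpr fun i => tendsto_pi_nhds.mpr fun j => hentry i j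

end InjAux

lemma InjAux.part1
    (n p : ℕ)
    (M : Matrix (Fin n) (Fin n) ℝ)
    (hM : ∀ z : ℂ, z ∈ spectrum ℂ (M.map (algebraMap ℝ ℂ)) → 0 < z.re)
    (H : Matrix (Fin n) (Fin p) ℝ) :
    Tendsto
      (fun w : Fin p → ℝ =>
        (NormedSpace.exp (Real.log (euclNorm w) • M)).mulVec
          (H.mulVec ((euclNorm w)⁻¹ • w)))
      (nhdsWithin 0 {0}ᶜ) (nhds 0) := by
  have hcont : Continuous fun w : Fin p → ℝ => euclNorm w := by
    apply Real.continuous_sqrt.comp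
    unfold dotProduct
    exact continuous_finset_sum _ fun i _ => (continuous_apply i).mul (continuous_apply i)
  have h0 : euclNorm (0 : Fin p → ℝ) = 0 := by simp [euclNorm, dotProduct]
  have hpos : ∀ w : Fin p → ℝ, w ≠ 0 → 0 < euclNorm w := by
    intro w hw
    obtain ⟨i, hi⟩ := Function.ne_iff.mp hw
    have hdot : 0 < w ⬝ᵥ w := by
      apply Finset.sum_pos' (fun k _ => mul_self_nonneg _)
      exact ⟨i, Finset.mem_univ i, mul_self_pos.mpr hi⟩
    exact Real.sqrt_pos.mpr hdot
  have habs : ∀ (w : Fin p → ℝ) (i : Fin p), |w i| ≤ euclNorm w := by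
    intro w i
    have h1 : w i * w i ≤ w ⬝ᵥ w :=
      Finset.single_le_sum (f := fun k => w k * w k)
        (fun k _ => mul_self_nonneg _) (Finset.mem_univ i)
    calc |w i| = Real.sqrt (w i * w i) := by
          rw [← Real.sqrt_sq_eq_abs, sq]
      _ ≤ euclNorm w := Real.sqrt_le_sqrt h1
  have hunit : ∀ w : Fin p → ℝ, w ≠ 0 → ‖(euclNorm w)⁻¹ • w‖ ≤ 1 := by
    intro w hw
    rw [pi_norm_le_iff_of_nonneg zero_le_one]
    intro i
    rw [Pi.smul_apply, smul_eq_mul, Real.norm_eq_abs, abs_mul, abs_inv,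
      abs_of_pos (hpos w hw), inv_mul_le_iff₀ (hpos w hw)]
    simpa using habs w i
  have hlog : Tendsto (fun w : Fin p → ℝ => Real.log (euclNorm w))
      (nhdsWithin 0 {0}ᶜ) atBot := by
    apply Real.tendsto_log_nhdsNE_zero.comp
    rw [tendsto_nhdsWithin_iff]
    constructor
    · have h5 := (hcont.tendsto 0).mono_left (nhdsWithin_le_nhds (s := {0}ᶜ))
      rwa [h0] at h5
    · filter_upwards [self_mem_nhdsWithin] with w hw
      exact (hpos w hw).ne'
  have hmat := (InjAux.mat_decay M hM).comp hlog
  have hnorm : Tendsto (fun w : Fin p → ℝ =>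
      ‖exp (Real.log (euclNorm w) • M)‖ * ‖H‖) (nhdsWithin 0 {0}ᶜ) (nhds 0) := by
    have h6 := (tendsto_norm_zero.comp hmat).mul_const ‖H‖
    rwa [zero_mul] at h6
  refine squeeze_zero_norm' ?_ hnorm
  filter_upwards [self_mem_nhdsWithin] with w hw
  have h2 : ‖H.mulVec ((euclNorm w)⁻¹ • w)‖ ≤ ‖H‖ :=
    (Matrix.linfty_opNorm_mulVec H _).trans
      (mul_le_of_le_one_right (norm_nonneg H) (hunit w hw))
  exact (Matrix.linfty_opNorm_mulVec _ _).trans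
    (mul_le_mul_of_nonneg_left h2 (norm_nonneg _))


theorem injection_term_vanishes_at_zero
    (n p : ℕ)
    (M : Matrix (Fin n) (Fin n) ℝ)
    -- M is anti-Hurwitz: all complex eigenvalues have strictly positive real part
    (hM : ∀ z : ℂ, z ∈ spectrum ℂ (M.map (algebraMap ℝ ℂ)) → 0 < z.re)
    (H : Matrix (Fin n) (Fin p) ℝ) :
    Tendsto
      (fun w : Fin p → ℝ =>
        (NormedSpace.exp (Real.log (euclNorm w) • M)).mulVec
          (H.mulVec ((euclNorm w)⁻¹ • w)))
      (nhdsWithin 0 {0}ᶜ) (nhds 0) ∧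
    ∀ F : (Fin p → ℝ) → (Fin n → ℝ),
      F 0 = 0 →
      (∀ w : Fin p → ℝ, w ≠ 0 →
        F w = (NormedSpace.exp (Real.log (euclNorm w) • M)).mulVec
          (H.mulVec ((euclNorm w)⁻¹ • w))) →
      ContinuousAt F 0 := by
  have hpart1 := InjAux.part1 n p M hM H
  refine ⟨hpart1, ?_⟩
  intro F hF0 hFe
  have h1 : Tendsto F (nhdsWithin 0 {0}ᶜ) (nhds 0) := by
    refine hpart1.congr' ?_
    filter_upwards [self_mem_nhdsWithin] with w hw
    exact (hFe w hw).symm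
  rw [ContinuousAt, hF0, ← nhdsNE_sup_pure (0 : Fin p → ℝ),
    tendsto_sup]
  exact ⟨h1, by simpa [hF0] using tendsto_pure_nhds F (0 : Fin p → ℝ)⟩
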